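/- For every f ∈ L^∞([0,∞)) the value K̄(f) = lim_{θ→0⁺} limsup_{x→∞} (1/θ)∫ₓ^{x+θ} f(t)dt satisfies −‖f‖_∞ ≤ K̄(f) ≤ ‖f‖_∞, and if lim_{x→∞} e^{−x}∫₀ˣ f(t)eᵗ dt = 0 then K̄(f) ≥ 0 and K̄(−f) ≥ 0. -/

import Mathlib

open Filter MeasureTheory Set Topology

/-- The inner limsup defining `K̄`. -/
noncomputable def innerK (f : ℝ → ℝ) (θ : ℝ) : ℝ :=
  Filter.limsup (fun x : ℝ => (∫ t in x..(x + θ), f t) / θ) Filter.atTop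

namespace KbarAux


/-- The sliding integral. -/
noncomputable def Phi (f : ℝ → ℝ) (θ x : ℝ) : ℝ := ∫ t in x..(x + θ), f t

/-- The un-normalized limsup. -/
noncomputable def g (f : ℝ → ℝ) (θ : ℝ) : ℝ := limsup (Phi f θ) atTop

lemma intervalIntegrable_of_bound {f : ℝ → ℝ} (hm : Measurable f) {C a b : ℝ}
    (h : ∀ x ∈ Set.uIoc a b, |f x| ≤ C) : IntervalIntegrable f volume a b := by
  rw [intervalIntegrable_iff]
  apply Measure.integrableOn_of_bounded (M := C)
  · rw [Set.uIoc]
    exact (measure_Ioc_lt_top).ne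
  · exact hm.aestronglyMeasurable
  · exact (ae_restrict_iff' measurableSet_uIoc).2 (Eventually.of_forall fun x hx => by
      simpa [Real.norm_eq_abs] using h x hx)

variable {f : ℝ → ℝ} {C : ℝ}

lemma abs_Phi_le (hm : Measurable f) (hb : ∀ x ≥ (0 : ℝ), |f x| ≤ C)
    {θ x : ℝ} (hx : 0 ≤ x) (hθ : 0 ≤ θ) : |Phi f θ x| ≤ C * θ := by
  have h : ∀ t ∈ Set.uIoc x (x + θ), ‖f t‖ ≤ C := by
    intro t ht
    rw [Set.uIoc_of_le (by linarith)] at ht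
    exact hb t (hx.trans ht.1.le)
  have := intervalIntegral.norm_integral_le_of_norm_le_const h
  simpa [Phi, Real.norm_eq_abs, abs_of_nonneg hθ] using this



lemma ev_abs (hm : Measurable f) (hb : ∀ x ≥ (0 : ℝ), |f x| ≤ C) {θ : ℝ} (hθ : 0 ≤ θ) (a : ℝ) :
    ∀ᶠ x : ℝ in atTop, |Phi f θ (x + a)| ≤ C * θ :=
  (eventually_ge_atTop (-a)).mono fun x hx => abs_Phi_le hm hb (by linarith) hθ

lemma bddAbove (hm : Measurable f) (hb : ∀ x ≥ (0 : ℝ), |f x| ≤ C) {θ : ℝ} (hθ : 0 ≤ θ) (a : ℝ) :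
    IsBoundedUnder (· ≤ ·) atTop (fun x => Phi f θ (x + a)) :=
  isBoundedUnder_of_eventually_le ((ev_abs hm hb hθ a).mono fun x hx => (abs_le.1 hx).2)

lemma bddBelow (hm : Measurable f) (hb : ∀ x ≥ (0 : ℝ), |f x| ≤ C) {θ : ℝ} (hθ : 0 ≤ θ) (a : ℝ) :
    IsBoundedUnder (· ≥ ·) atTop (fun x => Phi f θ (x + a)) :=
  isBoundedUnder_of_eventually_ge ((ev_abs hm hb hθ a).mono fun x hx => (abs_le.1 hx).1)

lemma map_shift (a : ℝ) : Filter.map (fun x : ℝ => x + a) atTop = atTop :=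
  map_atTop_eq_of_gc (fun b => b - a) 0 (fun x y h => by simpa using h)
    (fun x c _ => by constructor <;> intro h <;> linarith)
    (fun c _ => by linarith)

lemma limsup_shift (u : ℝ → ℝ) (a : ℝ) :
    limsup (fun x => u (x + a)) atTop = limsup u atTop := by
  conv_rhs => rw [← map_shift a]
  rw [Filter.limsup, Filter.limsup, Filter.map_map]
  rfl

lemma g_le (hm : Measurable f) (hb : ∀ x ≥ (0 : ℝ), |f x| ≤ C) {θ : ℝ} (hθ : 0 ≤ θ) :
    g f θ ≤ C * θ := by
  apply limsup_le_of_le (by simpa using (bddBelow hm hb hθ 0).isCoboundedUnder_le)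
  have := ev_abs hm hb hθ 0
  simp only [add_zero] at this ⊢
  exact this.mono fun x hx => (abs_le.1 hx).2

lemma neg_le_g (hm : Measurable f) (hb : ∀ x ≥ (0 : ℝ), |f x| ≤ C) {θ : ℝ} (hθ : 0 ≤ θ) :
    -(C * θ) ≤ g f θ := by
  apply le_limsup_of_frequently_le
  · have := ev_abs hm hb hθ 0
    simp only [add_zero] at this
    exact (this.mono fun x hx => (abs_le.1 hx).1).frequently
  · simpa using bddAbove hm hb hθ 0

lemma g_add (hm : Measurable f) (hb : ∀ x ≥ (0 : ℝ), |f x| ≤ C)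
    {a b : ℝ} (ha : 0 ≤ a) (hb' : 0 ≤ b) :
    g f (a + b) ≤ g f a + g f b := by
  have hsplit : ∀ᶠ x : ℝ in atTop, Phi f (a + b) x = Phi f a x + Phi f b (x + a) := by
    filter_upwards [eventually_ge_atTop (0 : ℝ)] with x hx
    have i1 : IntervalIntegrable f volume x (x + a) :=
      intervalIntegrable_of_bound hm fun t ht => by
        rw [Set.uIoc_of_le (by linarith)] at ht; exact hb t (by linarith [ht.1.le])
    have i2 : IntervalIntegrable f volume (x + a) (x + a + b) :=
      intervalIntegrable_of_bound hm fun t ht => by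
        rw [Set.uIoc_of_le (by linarith)] at ht; exact hb t (by nlinarith [ht.1.le])
    have := intervalIntegral.integral_add_adjacent_intervals i1 i2
    simp only [Phi]
    rw [show x + (a + b) = x + a + b by ring, ← this]
  have h1 : g f (a + b) = limsup (fun x => Phi f a x + Phi f b (x + a)) atTop :=
    limsup_congr hsplit
  rw [h1]
  have step : limsup (fun x => Phi f a x + Phi f b (x + a)) atTop ≤
      limsup (fun x => Phi f a x) atTop + limsup (fun x => Phi f b (x + a)) atTop := by
    have := limsup_add_le (f := atTop) (u := fun x => Phi f a x) (v := fun x => Phi f b (x + a))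
      (by simpa using bddBelow hm hb ha 0) (by simpa using bddAbove hm hb ha 0)
      ((bddBelow hm hb hb' a).isCoboundedUnder_le) (bddAbove hm hb hb' a)
    exact this
  refine step.trans ?_
  rw [limsup_shift (Phi f b) a]
  rfl


lemma g_nsmul (hm : Measurable f) (hb : ∀ x ≥ (0 : ℝ), |f x| ≤ C)
    {θ : ℝ} (hθ : 0 ≤ θ) : ∀ n : ℕ, g f ((n + 1 : ℕ) * θ) ≤ (n + 1 : ℕ) * g f θ := by
  intro n
  induction n with
  | zero => simp
  | succ n ih =>
      have h1 : ((n + 1 + 1 : ℕ) : ℝ) * θ = ((n + 1 : ℕ) : ℝ) * θ + θ := by push_cast; ring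
      rw [h1]
      calc g f (((n + 1 : ℕ) : ℝ) * θ + θ) ≤ g f ((n + 1 : ℕ) * θ) + g f θ :=
            g_add hm hb (by positivity) hθ
        _ ≤ ((n + 1 : ℕ) : ℝ) * g f θ + g f θ := by linarith
        _ = ((n + 1 + 1 : ℕ) : ℝ) * g f θ := by push_cast; ring

set_option maxHeartbeats 1000000 in
/-- Fekete-type key inequality near 0. -/
lemma key (hm : Measurable f) (hb : ∀ x ≥ (0 : ℝ), |f x| ≤ C) (hC : 0 ≤ C)
    {θ0 θ : ℝ} (hθ0 : 0 < θ0) (hθ : 0 < θ) (hhalf : θ ≤ θ0 / 2) :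
    g f θ0 / θ0 - ((2 * |g f θ0| + 2 * C * θ0) / θ0 ^ 2) * θ ≤ g f θ / θ := by
  set B := g f θ0 with hB
  set A := g f θ with hA
  obtain ⟨n, hnn⟩ : ∃ n : ℕ, ⌊θ0 / θ⌋₊ = n + 1 := by
    refine ⟨⌊θ0 / θ⌋₊ - 1, ?_⟩
    have : 1 ≤ ⌊θ0 / θ⌋₊ := Nat.le_floor (by rw [le_div_iff₀ hθ]; push_cast; linarith)
    omega
  have hfl : ((n + 1 : ℕ) : ℝ) ≤ θ0 / θ := by rw [← hnn]; exact Nat.floor_le (by positivity)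
  have hfl2 : θ0 / θ < (n + 1 : ℕ) + 1 := by rw [← hnn]; exact Nat.lt_floor_add_one _
  set m : ℝ := ((n + 1 : ℕ) : ℝ) * θ with hmdef
  have hm1 : m ≤ θ0 := by
    have h2 := (le_div_iff₀ hθ).1 hfl
    rw [hmdef]; linarith
  have hm2 : θ0 - θ < m := by
    have h2 := (div_lt_iff₀ hθ).1 hfl2
    rw [hmdef]; push_cast at h2 ⊢; linarith
  have hmpos : θ0 / 2 ≤ m := by linarith
  set r := θ0 - m with hrdef
  have hr0 : 0 ≤ r := by linarith
  have hrθ : r < θ := by simp only [hrdef]; linarith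
  -- g θ0 ≤ (n+1) g θ + C r
  have h1 : B ≤ ((n + 1 : ℕ) : ℝ) * A + C * r := by
    have e : θ0 = m + r := by simp [hrdef]
    calc B = g f (m + r) := by rw [← e]
      _ ≤ g f m + g f r := g_add hm hb (by positivity) hr0
      _ ≤ ((n + 1 : ℕ) : ℝ) * A + C * r := by
          have := g_nsmul hm hb hθ.le n
          have := g_le hm hb (f := f) (θ := r) hr0
          simp only [hmdef]; push_cast at *; linarith
  -- now the arithmetic
  have hNpos : (0 : ℝ) < ((n + 1 : ℕ) : ℝ) := by positivity
  have hmpos' : (0 : ℝ) < m := by positivity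
  have habs : -|B| ≤ B ∧ B ≤ |B| := ⟨neg_abs_le B, le_abs_self B⟩
  rw [div_sub' (by positivity), div_le_div_iff₀ (by positivity) hθ]
  have hAB : ((n + 1 : ℕ) : ℝ) * A ≥ B - C * θ := by nlinarith
  have hA1 : A ≤ C * θ := g_le hm hb hθ.le
  have hA2 : -(C * θ) ≤ A := neg_le_g hm hb hθ.le
  have hABθ : (B - C * θ) * θ ≤ m * A := by
    rw [hmdef]; nlinarith [hAB, hθ.le]
  clear_value B A m
  have hKe : θ0 * ((2 * |B| + 2 * C * θ0) / θ0 ^ 2 * θ) * θ = (2 * |B| + 2 * C * θ0) * θ ^ 2 / θ0 := by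
    field_simp
  have hgoal2 : (B * θ - A * θ0) * θ0 ≤ (2 * |B| + 2 * C * θ0) * θ ^ 2 := by
    have hint1 : 0 ≤ (m * A - (B - C * θ) * θ) * θ0 := mul_nonneg (by linarith) hθ0.le
    have hint2 : 0 ≤ (A + C * θ) * ((θ0 - m) * θ0) :=
      mul_nonneg (by linarith) (mul_nonneg (by linarith) hθ0.le)
    have hint3 : 0 ≤ (θ - (θ0 - m)) * (C * θ * θ0) := mul_nonneg (by linarith) (by positivity)
    have hint4 : 0 ≤ |B| * θ ^ 2 := by positivity
    nlinarith [hint1, hint2, hint3, hint4]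
  rw [sub_mul, hKe]
  have hfin : B * θ - A * θ0 ≤ (2 * |B| + 2 * C * θ0) * θ ^ 2 / θ0 :=
    (le_div_iff₀ hθ0).2 (by nlinarith [hgoal2])
  linarith

lemma innerK_eq (hm : Measurable f) (hb : ∀ x ≥ (0 : ℝ), |f x| ≤ C) {θ : ℝ} (hθ : 0 < θ) :
    innerK f θ = g f θ / θ := by
  have hinv : (0 : ℝ) < θ⁻¹ := inv_pos.2 hθ
  let e : ℝ ≃o ℝ := OrderIso.mulRight₀ θ⁻¹ hinv
  have hb1 := by simpa using bddAbove hm hb hθ.le 0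
  have hb2 : IsCoboundedUnder (· ≤ ·) atTop (Phi f θ) :=
    (by simpa using bddBelow hm hb hθ.le 0 : IsBoundedUnder (· ≥ ·) atTop (Phi f θ)).isCoboundedUnder_le
  have hb3 : IsBoundedUnder (· ≤ ·) atTop (fun x => Phi f θ x * θ⁻¹) := by
    obtain ⟨M, hM⟩ := hb1
    exact ⟨M * θ⁻¹, by
      simp only [Filter.eventually_map] at hM ⊢
      exact hM.mono fun x hx => mul_le_mul_of_nonneg_right hx hinv.le⟩
  have hb4 : IsCoboundedUnder (· ≤ ·) atTop (fun x => Phi f θ x * θ⁻¹) := by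
    obtain ⟨M, hM⟩ := by
      simpa using bddBelow hm hb hθ.le 0 (f := f) (C := C)
    refine IsBoundedUnder.isCoboundedUnder_le (⟨M * θ⁻¹, ?_⟩ : IsBoundedUnder (· ≥ ·) atTop _)
    simp only [Filter.eventually_map] at hM ⊢
    exact hM.mono fun x hx => mul_le_mul_of_nonneg_right hx hinv.le
  have := e.limsup_apply (f := atTop) (u := Phi f θ) hb1 hb2 hb3 hb4
  have he : ∀ y : ℝ, e y = y * θ⁻¹ := fun y => rfl
  simp only [he] at this
  rw [innerK]
  simp only [div_eq_mul_inv]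
  exact (this.symm : limsup (fun x => Phi f θ x * θ⁻¹) atTop = g f θ * θ⁻¹)



lemma main (f : ℝ → ℝ) (C : ℝ) (hm : Measurable f) (hb : ∀ x ≥ (0 : ℝ), |f x| ≤ C) :
    ∃ L : ℝ, Tendsto (innerK f) (𝓝[>] (0 : ℝ)) (𝓝 L) ∧
      (∀ θ : ℝ, 0 < θ → innerK f θ ≤ L) ∧ -C ≤ L ∧ L ≤ C := by
  have hC : 0 ≤ C := (abs_nonneg (f 0)).trans (hb 0 le_rfl)
  set S := sSup ((fun θ => g f θ / θ) '' Ioi (0 : ℝ)) with hS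
  have hub : ∀ y ∈ (fun θ => g f θ / θ) '' Ioi (0 : ℝ), y ≤ C := by
    rintro y ⟨θ, hθ, rfl⟩
    rw [mem_Ioi] at hθ
    rw [div_le_iff₀ hθ]
    exact g_le hm hb hθ.le
  have hbdd : BddAbove ((fun θ => g f θ / θ) '' Ioi (0 : ℝ)) := ⟨C, hub⟩
  have hne : ((fun θ => g f θ / θ) '' Ioi (0 : ℝ)).Nonempty := ⟨g f 1 / 1, ⟨1, by simp⟩⟩
  have hle : ∀ θ : ℝ, 0 < θ → g f θ / θ ≤ S := fun θ hθ => le_csSup hbdd ⟨θ, hθ, rfl⟩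
  have hSC : S ≤ C := csSup_le hne hub
  have hCS : -C ≤ S := by
    refine le_trans ?_ (hle 1 one_pos)
    have := neg_le_g hm hb (f := f) (θ := 1) zero_le_one
    simpa using this
  refine ⟨S, ?_, fun θ hθ => (innerK_eq hm hb hθ).le.trans (hle θ hθ), hCS, hSC⟩
  have htend : Tendsto (fun θ => g f θ / θ) (𝓝[>] (0 : ℝ)) (𝓝 S) := by
    rw [Metric.tendsto_nhdsWithin_nhds]
    intro ε hε
    obtain ⟨y, ⟨θ0, hθ0, rfl⟩, hy⟩ := exists_lt_of_lt_csSup hne (show S - ε / 2 < S by linarith)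
    rw [mem_Ioi] at hθ0
    set K := (2 * |g f θ0| + 2 * C * θ0) / θ0 ^ 2 with hK
    have hK0 : 0 ≤ K := by positivity
    refine ⟨min (θ0 / 2) (ε / (2 * (K + 1))), by positivity, fun θ hθ hd => ?_⟩
    rw [mem_Ioi] at hθ
    rw [Real.dist_eq, sub_zero, abs_of_pos hθ] at hd
    have h1 : θ ≤ θ0 / 2 := le_of_lt (lt_of_lt_of_le hd (min_le_left _ _))
    have h2 : θ < ε / (2 * (K + 1)) := lt_of_lt_of_le hd (min_le_right _ _)
    have hkey := key hm hb hC hθ0 hθ h1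
    have hKθ : K * θ < ε / 2 := by
      rw [lt_div_iff₀ (by positivity : (0:ℝ) < 2 * (K + 1))] at h2
      nlinarith
    have hlow : S - ε < g f θ / θ := by
      have : g f θ0 / θ0 - K * θ ≤ g f θ / θ := hkey
      nlinarith
    rw [Real.dist_eq, abs_sub_lt_iff]
    exact ⟨by linarith [hle θ hθ], by linarith⟩
  refine htend.congr' ?_
  filter_upwards [self_mem_nhdsWithin] with θ hθ
  exact (innerK_eq hm hb (mem_Ioi.1 hθ)).symm


lemma taub (hm : Measurable f) (hb : ∀ x ≥ (0 : ℝ), |f x| ≤ C)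
    (hT : Tendsto (fun x : ℝ =>
      Real.exp (-x) * ∫ t in (0 : ℝ)..x, f t * Real.exp t) atTop (𝓝 0))
    {θ : ℝ} (hθ : 0 < θ) : -(C * θ) * θ ≤ g f θ := by
  have hC : 0 ≤ C := (abs_nonneg (f 0)).trans (hb 0 le_rfl)
  set G : ℝ → ℝ := fun x => ∫ t in (0 : ℝ)..x, f t * Real.exp t with hG
  set F : ℝ → ℝ := fun x => Real.exp (-x) * G x with hF
  -- integrability of f t * exp t on [a,b] ⊆ [0,∞)
  have hint : ∀ a b : ℝ, 0 ≤ a → 0 ≤ b →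
      IntervalIntegrable (fun t => f t * Real.exp t) volume a b := by
    intro a b ha hb0
    refine intervalIntegrable_of_bound (hm.mul Real.measurable_exp)
      (C := C * Real.exp (max a b)) fun t ht => ?_
    rw [Set.uIoc] at ht
    have h1 : a ⊓ b ≤ t := ht.1.le
    have h2 : t ≤ a ⊔ b := ht.2
    rcases le_total a b with hab | hab
    · rw [inf_eq_left.2 hab] at h1
      rw [Pi.mul_apply, abs_mul, abs_of_pos (Real.exp_pos t)]
      exact mul_le_mul (hb t (ha.trans h1)) (Real.exp_le_exp.2 h2) (Real.exp_pos t).le hC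
    · rw [inf_eq_right.2 hab] at h1
      rw [Pi.mul_apply, abs_mul, abs_of_pos (Real.exp_pos t)]
      exact mul_le_mul (hb t (hb0.trans h1)) (Real.exp_le_exp.2 h2) (Real.exp_pos t).le hC
  -- the pointwise lower bound
  have hpt : ∀ x : ℝ, 0 ≤ x →
      F (x + θ) - Real.exp (-θ) * F x - C * (1 - Real.exp (-θ)) * θ ≤ Phi f θ x := by
    intro x hx
    set E : ℝ := Real.exp (x + θ) with hE
    have hEpos : 0 < E := Real.exp_pos _
    have i1 : IntervalIntegrable f volume x (x + θ) := by
      refine intervalIntegrable_of_bound hm (C := C) fun t ht => ?_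
      rw [Set.uIoc_of_le (by linarith)] at ht
      exact hb t (by linarith [ht.1.le])
    have i2 : IntervalIntegrable (fun t => f t * Real.exp t) volume x (x + θ) := hint _ _ hx (by linarith)
    -- ∫ₓ^{x+θ} f t e^t = G(x+θ) - G x
    have step1 : ∫ t in x..(x + θ), f t * Real.exp t = G (x + θ) - G x := by
      have := intervalIntegral.integral_add_adjacent_intervals (hint 0 x le_rfl hx) i2
      simp only [hG]
      linarith
    -- ∫ₓ^{x+θ} (f t - f t e^t / E) is small
    have key2 : |∫ t in x..(x + θ), (f t - f t * Real.exp t / E)| ≤ C * (1 - Real.exp (-θ)) * θ := by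
      have hbd : ∀ t ∈ Set.uIoc x (x + θ), ‖f t - f t * Real.exp t / E‖ ≤ C * (1 - Real.exp (-θ)) := by
        intro t ht
        rw [Set.uIoc_of_le (by linarith)] at ht
        have htx : x < t := ht.1
        have htθ : t ≤ x + θ := ht.2
        have hE1 : Real.exp t / E ≤ 1 := by
          rw [div_le_one hEpos, hE]
          exact Real.exp_le_exp.2 htθ
        have hE2 : Real.exp (-θ) < Real.exp t / E := by
          rw [lt_div_iff₀ hEpos, hE, ← Real.exp_add]
          exact Real.exp_lt_exp.2 (by linarith)
        have : f t - f t * Real.exp t / E = f t * (1 - Real.exp t / E) := by ring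
        rw [this, Real.norm_eq_abs, abs_mul]
        have h1 : |1 - Real.exp t / E| ≤ 1 - Real.exp (-θ) := by
          rw [abs_of_nonneg (by linarith)]
          linarith
        exact mul_le_mul (hb t (by linarith)) h1 (abs_nonneg _) hC
      have := intervalIntegral.norm_integral_le_of_norm_le_const hbd
      simpa [Real.norm_eq_abs, abs_of_nonneg hθ.le, mul_comm] using this
    -- combine
    have hsub : ∫ t in x..(x + θ), (f t - f t * Real.exp t / E) =
        Phi f θ x - (G (x + θ) - G x) / E := by
      rw [intervalIntegral.integral_sub i1 (i2.div_const E)]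
      rw [intervalIntegral.integral_div, step1]
      rfl
    have h2 : Phi f θ x ≥ (G (x + θ) - G x) / E - C * (1 - Real.exp (-θ)) * θ := by
      have := (abs_le.1 key2).1
      rw [hsub] at this
      linarith
    have hFe : (G (x + θ) - G x) / E = F (x + θ) - Real.exp (-θ) * F x := by
      simp only [hF, hE, Real.exp_neg, Real.exp_add]
      field_simp
    linarith [h2, hFe ▸ h2]
  -- the limit of the lower bound
  set ψ : ℝ → ℝ := fun x => F (x + θ) - Real.exp (-θ) * F x - C * (1 - Real.exp (-θ)) * θ with hψ
  have hψt : Tendsto ψ atTop (𝓝 (0 - Real.exp (-θ) * 0 - C * (1 - Real.exp (-θ)) * θ)) := by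
    have h1 : Tendsto (fun x => F (x + θ)) atTop (𝓝 0) :=
      hT.comp (tendsto_atTop_add_const_right atTop θ tendsto_id)
    exact (h1.sub ((hT.const_mul _))).sub_const _
  have hψlim : Tendsto ψ atTop (𝓝 (-(C * (1 - Real.exp (-θ)) * θ))) := by
    simpa using hψt
  have hliminfψ : liminf ψ atTop = -(C * (1 - Real.exp (-θ)) * θ) := hψlim.liminf_eq
  have hbb : IsBoundedUnder (· ≥ ·) atTop (Phi f θ) := by
    simpa using bddBelow hm hb hθ.le 0
  have hba : IsBoundedUnder (· ≤ ·) atTop (Phi f θ) := by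
    simpa using bddAbove hm hb hθ.le 0
  have hstep : liminf ψ atTop ≤ liminf (Phi f θ) atTop := by
    refine liminf_le_liminf ?_ ?_ ?_
    · filter_upwards [eventually_ge_atTop (0 : ℝ)] with x hx using hpt x hx
    · exact hψlim.isBoundedUnder_ge
    · exact hba.isCoboundedUnder_ge
  have hfin : -(C * (1 - Real.exp (-θ)) * θ) ≤ g f θ := by
    rw [← hliminfψ]
    exact hstep.trans (liminf_le_limsup hba hbb)
  have hexp : 1 - Real.exp (-θ) ≤ θ := by
    have := Real.add_one_le_exp (-θ)
    linarith
  nlinarith [hfin, mul_le_mul_of_nonneg_left hexp (mul_nonneg hC hθ.le)]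


end KbarAux

lemma KbarAux.nonneg_of_forall {C L : ℝ} (hC : 0 ≤ C) (h : ∀ θ : ℝ, 0 < θ → -(C * θ) ≤ L) :
    0 ≤ L := by
  by_contra hneg
  push_neg at hneg
  rcases eq_or_lt_of_le hC with hC0 | hC0
  · have := h 1 one_pos
    rw [← hC0] at this
    simp at this
    linarith
  · have hθ : 0 < -L / (2 * C) := div_pos (by linarith) (by linarith)
    have h2 := h _ hθ
    have h3 : -(C * (-L / (2 * C))) = L / 2 := by field_simp
    rw [h3] at h2
    linarith

/-- For `f ∈ L^∞([0,∞))`: `−‖f‖_∞ ≤ K̄(f) ≤ ‖f‖_∞`, and if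
`lim_{x→∞} e^{−x}∫₀ˣ f(t)eᵗ dt = 0` then `K̄(f) ≥ 0` and `K̄(−f) ≥ 0`. -/
theorem Kbar_bounds_and_nonneg (f : ℝ → ℝ) (C : ℝ)
    (hm : Measurable f) (hb : ∀ x ≥ (0 : ℝ), |f x| ≤ C) :
    ∃ L L' : ℝ,
      Tendsto (innerK f) (𝓝[>] (0 : ℝ)) (𝓝 L) ∧
      Tendsto (innerK (fun x => -f x)) (𝓝[>] (0 : ℝ)) (𝓝 L') ∧
      -C ≤ L ∧ L ≤ C ∧
      (Tendsto (fun x : ℝ =>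
          Real.exp (-x) * ∫ t in (0 : ℝ)..x, f t * Real.exp t) atTop (𝓝 0) →
        0 ≤ L ∧ 0 ≤ L') := by
  have hC : 0 ≤ C := (abs_nonneg (f 0)).trans (hb 0 le_rfl)
  obtain ⟨L, hL, hLle, hL1, hL2⟩ := KbarAux.main f C hm hb
  have hm' : Measurable (fun x => -f x) := hm.neg
  have hb' : ∀ x ≥ (0 : ℝ), |(fun x => -f x) x| ≤ C := fun x hx => by simpa using hb x hx
  obtain ⟨L', hL', hL'le, _, _⟩ := KbarAux.main (fun x => -f x) C hm' hb'
  refine ⟨L, L', hL, hL', hL1, hL2, fun hT => ?_⟩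
  constructor
  · refine KbarAux.nonneg_of_forall hC fun θ hθ => ?_
    have h1 := KbarAux.taub hm hb hT hθ
    have h2 : -(C * θ) ≤ innerK f θ := by
      rw [KbarAux.innerK_eq hm hb hθ, le_div_iff₀ hθ]
      exact h1
    exact h2.trans (hLle θ hθ)
  · have hT' : Tendsto (fun x : ℝ =>
        Real.exp (-x) * ∫ t in (0 : ℝ)..x, (fun y => -f y) t * Real.exp t) atTop (𝓝 0) := by
      have heq : (fun x : ℝ => Real.exp (-x) * ∫ t in (0 : ℝ)..x, (fun y => -f y) t * Real.exp t)
          = fun x : ℝ => -(Real.exp (-x) * ∫ t in (0 : ℝ)..x, f t * Real.exp t) := by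
        funext x
        have : ∫ t in (0 : ℝ)..x, (fun y => -f y) t * Real.exp t
            = -∫ t in (0 : ℝ)..x, f t * Real.exp t := by
          simp only [neg_mul]
          exact intervalIntegral.integral_neg
        rw [this]; ring
      rw [heq]
      simpa using hT.neg
    refine KbarAux.nonneg_of_forall hC fun θ hθ => ?_
    have h1 := KbarAux.taub hm' hb' hT' hθ
    have h2 : -(C * θ) ≤ innerK (fun x => -f x) θ := by
      rw [KbarAux.innerK_eq hm' hb' hθ, le_div_iff₀ hθ]
      exact h1
    exact h2.trans (hL'le θ hθ)
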